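/- Let g : ℝ² → ℝ be continuously differentiable and assume that ∇g(x) ≠ 0 for every x with g(x) = 0. Then the topological frontier of Ω_g = interior {x ∈ ℝ² : g(x) ≤ 0} equals the zero level set {x ∈ ℝ² : g(x) = 0}. -/

import Mathlib

open Filter Topology Set

lemma key_signs (g : EuclideanSpace ℝ (Fin 2) → ℝ) (hg : ContDiff ℝ 1 g)
    (x : EuclideanSpace ℝ (Fin 2)) (hx : g x = 0) (hv : gradient g x ≠ 0) :
    (∀ᶠ t in 𝓝[>] (0:ℝ), 0 < g (x + t • gradient g x)) ∧
    (∀ᶠ t in 𝓝[<] (0:ℝ), g (x + t • gradient g x) < 0) := by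
  set v := gradient g x with hvdef
  have hdiff : DifferentiableAt ℝ g x := (hg.differentiable one_ne_zero) x
  have hgr : HasGradientAt g v x := hdiff.hasGradientAt
  have hfd : HasFDerivAt g ((InnerProductSpace.toDual ℝ _) v) x := hgr
  have h1 : HasDerivAt (fun t : ℝ => x + t • v) v 0 := by
    simpa using ((hasDerivAt_id (0:ℝ)).smul_const v).const_add x
  have h2 : HasDerivAt (fun t : ℝ => g (x + t • v)) (inner ℝ v v : ℝ) 0 := by
    have hfd' : HasFDerivAt g ((InnerProductSpace.toDual ℝ _) v) (x + (0:ℝ) • v) := by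
      simpa using hfd
    have := hfd'.comp_hasDerivAt 0 h1
    simp only [Function.comp_def, InnerProductSpace.toDual_apply_apply] at this
    exact this
  have hc : (0:ℝ) < inner ℝ v v := by
    rw [real_inner_self_eq_norm_sq]
    exact pow_pos (norm_pos_iff.mpr hv) 2
  rw [hasDerivAt_iff_tendsto_slope] at h2
  have hpos : ∀ᶠ t in 𝓝[≠] (0:ℝ), 0 < slope (fun t : ℝ => g (x + t • v)) 0 t :=
    h2.eventually (eventually_gt_nhds hc)
  have hslope : ∀ t : ℝ, slope (fun t : ℝ => g (x + t • v)) 0 t = g (x + t • v) / t := by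
    intro t; simp [slope, hx, inv_mul_eq_div]
  constructor
  · have := hpos.filter_mono (nhdsWithin_mono 0 (fun t (ht : t ∈ Ioi (0:ℝ)) => ne_of_gt ht))
    filter_upwards [this, self_mem_nhdsWithin] with t ht (ht' : (0:ℝ) < t)
    rw [hslope] at ht
    exact (div_pos_iff.mp ht).resolve_right (fun h => absurd ht' (not_lt.mpr h.2.le)) |>.1
  · have := hpos.filter_mono (nhdsWithin_mono 0 (fun t (ht : t ∈ Iio (0:ℝ)) => ne_of_lt ht))
    filter_upwards [this, self_mem_nhdsWithin] with t ht (ht' : t < (0:ℝ))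
    rw [hslope] at ht
    rcases div_pos_iff.mp ht with ⟨h, hden⟩ | ⟨h, _⟩
    · exact absurd hden (not_lt.mpr ht'.le)
    · exact h

/-- If `g : ℝ² → ℝ` is continuously differentiable and `∇g x ≠ 0`
whenever `g x = 0`, then the frontier of `Ω_g = interior {x | g x ≤ 0}` equals the
zero level set `{x | g x = 0}`. -/
theorem frontier_sublevel_eq_zero_level
    (g : EuclideanSpace ℝ (Fin 2) → ℝ) (hg : ContDiff ℝ 1 g)
    (hgrad : ∀ x : EuclideanSpace ℝ (Fin 2), g x = 0 → gradient g x ≠ 0) :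
    frontier (interior {x : EuclideanSpace ℝ (Fin 2) | g x ≤ 0}) =
      {x : EuclideanSpace ℝ (Fin 2) | g x = 0} := by
  have hcont : Continuous g := hg.continuous
  have hUopen : IsOpen {x : EuclideanSpace ℝ (Fin 2) | g x < 0} :=
    isOpen_lt hcont continuous_const
  have htend : ∀ x : EuclideanSpace ℝ (Fin 2),
      Tendsto (fun t : ℝ => x + t • gradient g x) (𝓝 0) (𝓝 x) := by
    intro x
    have : Continuous fun t : ℝ => x + t • gradient g x := by fun_prop
    simpa using this.tendsto 0
  have hint : interior {x : EuclideanSpace ℝ (Fin 2) | g x ≤ 0} = {x : EuclideanSpace ℝ (Fin 2) | g x < 0} := by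
    apply subset_antisymm
    · intro x hx
      have hle : g x ≤ 0 := by
        have := interior_subset hx
        simpa using this
      by_contra h
      have hx0 : g x = 0 := le_antisymm hle (not_lt.mp h)
      have hkey := (key_signs g hg x hx0 (hgrad x hx0)).1
      have hmem : {x : EuclideanSpace ℝ (Fin 2) | g x ≤ 0} ∈ 𝓝 x :=
        mem_interior_iff_mem_nhds.mp hx
      have hle' : ∀ᶠ t in 𝓝[>] (0:ℝ), g (x + t • gradient g x) ≤ 0 :=
        (((htend x).eventually hmem)).filter_mono nhdsWithin_le_nhds
      rcases (hkey.and hle').exists with ⟨t, h1, h2⟩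
      exact absurd h2 (not_le.mpr h1)
    · exact hUopen.subset_interior_iff.mpr (fun y (hy : g y < 0) => le_of_lt hy)
  rw [hint]
  rw [hUopen.frontier_eq]
  ext x
  simp only [mem_diff, mem_setOf_eq]
  constructor
  · rintro ⟨hcl, hnot⟩
    have : g x ≤ 0 := by
      have hclosed : IsClosed {y : EuclideanSpace ℝ (Fin 2) | g y ≤ 0} :=
        isClosed_le hcont continuous_const
      exact hclosed.closure_subset_iff.mpr (fun y (hy : g y < 0) => le_of_lt hy) hcl
    exact le_antisymm this (not_lt.mp hnot)
  · intro hx0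
    refine ⟨?_, by simp [hx0]⟩
    have hkey := (key_signs g hg x hx0 (hgrad x hx0)).2
    exact mem_closure_of_tendsto ((htend x).mono_left nhdsWithin_le_nhds)
      (hkey.mono fun t ht => ht)
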